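/- Let M be a d-dimensional K-vector space with basis e_1,…,e_d, and define the Hodge-type star operator ⋆ : ∧^k M → ∧^{d−k} M by ⋆ e_φ = sgn(φ*) e_{φ*}, where e_φ = e_{φ(1)} ∧ … ∧ e_{φ(k)} for injective order morphisms φ : [k] → [d]. Then for every invertible endomorphism A of M, acting on exterior powers functorially: det(A) · ((A^{-1})^t ∘ ⋆) = ⋆ ∘ ∧^k A, where (A^{-1})^t is the transpose with respect to the given basis acting on ∧^{d−k} M. -/

import Mathlib

section AuxJacobi

open Finset Equiv

variable {d : ℕ}

/-- `j ≤ f j` for a strictly monotone map of `Fin`s. -/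
lemma strictMono_le_apply {n : ℕ} {f : Fin n → Fin d} (hf : StrictMono f) (j : Fin n) :
    (j : ℕ) ≤ (f j : ℕ) := by
  obtain ⟨jv, hjv⟩ := j
  induction jv with
  | zero => exact Nat.zero_le _
  | succ i ih =>
    have h1 : (⟨i, by omega⟩ : Fin n) < ⟨i + 1, hjv⟩ := by
      rw [Fin.lt_def]; exact Nat.lt_succ_self i
    have h2 := hf h1
    rw [Fin.lt_def] at h2
    have h3 := ih (by omega)
    simp only [Fin.val_mk] at h2 h3 ⊢
    omega

/-- count of elements below the `j`-th element. -/
lemma card_filter_lt_orderEmbOfFin {T : Finset (Fin d)} {n : ℕ} (h : T.card = n) (j : Fin n) :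
    (T.filter (fun y => y < T.orderEmbOfFin h j)).card = (j : ℕ) := by
  have himg : T.filter (fun y => y < T.orderEmbOfFin h j)
      = (Finset.Iio j).image (T.orderEmbOfFin h) := by
    ext y
    simp only [mem_filter, mem_image, mem_Iio]
    constructor
    · rintro ⟨hyT, hy⟩
      have : y ∈ Set.range (T.orderEmbOfFin h) := by
        rw [range_orderEmbOfFin]; exact hyT
      obtain ⟨i, rfl⟩ := this
      exact ⟨i, (T.orderEmbOfFin h).lt_iff_lt.mp hy, rfl⟩
    · rintro ⟨i, hi, rfl⟩
      exact ⟨orderEmbOfFin_mem _ _ _, (T.orderEmbOfFin h).lt_iff_lt.mpr hi⟩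
  rw [himg, Finset.card_image_of_injective _ (T.orderEmbOfFin h).injective, Fin.card_Iio]

/-- Characterization of the `j`-th element of a finset. -/
lemma orderEmbOfFin_eq_of {T : Finset (Fin d)} {n : ℕ} (h : T.card = n) (j : Fin n) (b : Fin d)
    (hb : b ∈ T) (hc : (T.filter (fun y => y < b)).card = (j : ℕ)) :
    T.orderEmbOfFin h j = b := by
  have : b ∈ Set.range (T.orderEmbOfFin h) := by rw [range_orderEmbOfFin]; exact hb
  obtain ⟨j', rfl⟩ := this
  have := card_filter_lt_orderEmbOfFin h j'
  have : (j' : ℕ) = (j : ℕ) := by omega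
  congr 1
  exact Fin.ext this.symm

lemma orderEmbOfFin_congr {S T : Finset (Fin d)} (hST : S = T) {n : ℕ} (h : S.card = n)
    (h' : T.card = n) (i : Fin n) : S.orderEmbOfFin h i = T.orderEmbOfFin h' i := by
  subst hST; rfl

lemma orderEmbOfFin_univ {d n : ℕ} (h : (Finset.univ : Finset (Fin d)).card = n) (i : Fin n) :
    ((Finset.univ : Finset (Fin d)).orderEmbOfFin h i : ℕ) = (i : ℕ) := by
  have hn : n = d := by simpa using h.symm
  subst hn
  have : (Finset.univ : Finset (Fin n)).orderEmbOfFin h i = i := by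
    apply orderEmbOfFin_eq_of
    · exact mem_univ _
    · have : (Finset.univ.filter (fun y => y < i) : Finset (Fin n)) = Finset.Iio i := by
        ext y; simp
      rw [this, Fin.card_Iio]
  rw [this]

lemma orderEmbOfFin_of_initial {T : Finset (Fin d)} {n : ℕ} (h : T.card = n) (j : Fin n)
    (b : Fin d) (hjb : (j : ℕ) = (b : ℕ)) (hinit : ∀ y : Fin d, y ≤ b → y ∈ T) :
    T.orderEmbOfFin h j = b := by
  apply orderEmbOfFin_eq_of h j b (hinit b le_rfl)
  have : T.filter (fun y => y < b) = Finset.Iio b := by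
    ext y
    simp only [mem_filter, Finset.mem_Iio]
    exact ⟨fun hy => hy.2, fun hy => ⟨hinit y hy.le, hy⟩⟩
  rw [this, Fin.card_Iio, hjb]

lemma orderEmbOfFin_insert_of_lt {T : Finset (Fin d)} {n : ℕ} (h : T.card = n) (a : Fin d)
    (ha : a ∉ T) (h' : (insert a T).card = n + 1) (j : Fin n) (hj1 : (j : ℕ) + 1 < n + 1)
    (hab : a < T.orderEmbOfFin h j) :
    (insert a T).orderEmbOfFin h' ⟨(j : ℕ) + 1, hj1⟩ = T.orderEmbOfFin h j := by
  apply orderEmbOfFin_eq_of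
  · exact mem_insert_of_mem (orderEmbOfFin_mem _ _ _)
  · rw [filter_insert, if_pos hab, card_insert_of_notMem (fun hc => ha (mem_filter.mp hc).1),
      card_filter_lt_orderEmbOfFin]

lemma orderEmbOfFin_erase_min {S : Finset (Fin d)} {n : ℕ} (hS : S.card = n + 1)
    (hne : S.Nonempty) {h' : (S.erase (S.min' hne)).card = n} (i : Fin n) :
    (S.erase (S.min' hne)).orderEmbOfFin h' i = S.orderEmbOfFin hS ⟨(i : ℕ) + 1, by omega⟩ := by
  have key : (fun i : Fin n => S.orderEmbOfFin hS ⟨(i : ℕ) + 1, by omega⟩)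
      = (S.erase (S.min' hne)).orderEmbOfFin h' := by
    apply orderEmbOfFin_unique
    · intro x
      rw [mem_erase]
      constructor
      · have h0 : S.min' hne = S.orderEmbOfFin hS ⟨0, by omega⟩ :=
          (orderEmbOfFin_zero hS (by omega)).symm
        intro hc
        have := (S.orderEmbOfFin hS).injective (hc.trans h0)
        simp [Fin.ext_iff] at this
      · exact orderEmbOfFin_mem _ _ _
    · intro x y hxy
      apply (S.orderEmbOfFin hS).strictMono
      rw [Fin.lt_def]
      simpa using hxy
  rw [← key]

/-- The equivalence `Fin m ⊕ Fin k ≃ Fin d` given by enumerating `S` and then `Sᶜ`. -/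
noncomputable def sumEquiv (S : Finset (Fin d)) {m k : ℕ} (hm : S.card = m)
    (hk : Sᶜ.card = k) : Fin m ⊕ Fin k ≃ Fin d :=
  Equiv.ofBijective (Sum.elim (S.orderEmbOfFin hm) (Sᶜ.orderEmbOfFin hk)) <| by
    rw [Fintype.bijective_iff_injective_and_card]
    constructor
    · rintro (a | a) (b | b) hab
      · simp only [Sum.elim_inl] at hab
        exact congrArg _ ((S.orderEmbOfFin hm).injective hab)
      · exfalso
        have h1 := orderEmbOfFin_mem S hm a
        have h2 := orderEmbOfFin_mem Sᶜ hk b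
        simp only [Sum.elim_inl, Sum.elim_inr] at hab
        rw [hab] at h1
        rw [Finset.mem_compl] at h2
        exact h2 h1
      · exfalso
        have h1 := orderEmbOfFin_mem S hm b
        have h2 := orderEmbOfFin_mem Sᶜ hk a
        simp only [Sum.elim_inl, Sum.elim_inr] at hab
        rw [← hab] at h1
        rw [Finset.mem_compl] at h2
        exact h2 h1
      · simp only [Sum.elim_inr] at hab
        exact congrArg _ ((Sᶜ.orderEmbOfFin hk).injective hab)
    · have := Finset.card_add_card_compl S
      simp only [Fintype.card_sum, Fintype.card_fin]
      rw [hm, hk] at this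
      simpa using this

@[simp] lemma sumEquiv_inl (S : Finset (Fin d)) {m k : ℕ} (hm : S.card = m)
    (hk : Sᶜ.card = k) (i : Fin m) : sumEquiv S hm hk (Sum.inl i) = S.orderEmbOfFin hm i := rfl

@[simp] lemma sumEquiv_inr (S : Finset (Fin d)) {m k : ℕ} (hm : S.card = m)
    (hk : Sᶜ.card = k) (i : Fin k) : sumEquiv S hm hk (Sum.inr i) = Sᶜ.orderEmbOfFin hk i := rfl

/-- The shuffle permutation of `Fin d` sending `[0,m)` to `S` and `[m,d)` to `Sᶜ`,
order-preservingly on each block. -/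
noncomputable def complPerm (S : Finset (Fin d)) {m k : ℕ} (hm : S.card = m)
    (hk : Sᶜ.card = k) (hd : m + k = d) : Equiv.Perm (Fin d) :=
  ((finCongr hd).symm.trans finSumFinEquiv.symm).trans (sumEquiv S hm hk)

lemma complPerm_apply_lt (S : Finset (Fin d)) {m k : ℕ} (hm : S.card = m)
    (hk : Sᶜ.card = k) (hd : m + k = d) (x : Fin d) (hx : (x : ℕ) < m) :
    complPerm S hm hk hd x = S.orderEmbOfFin hm ⟨x, hx⟩ := by
  have h1 : (finCongr hd).symm x = Fin.castAdd k ⟨(x : ℕ), hx⟩ := by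
    apply Fin.ext; simp
  rw [complPerm]
  simp only [trans_apply]
  rw [h1, finSumFinEquiv_symm_apply_castAdd, sumEquiv_inl]

lemma complPerm_apply_ge (S : Finset (Fin d)) {m k : ℕ} (hm : S.card = m)
    (hk : Sᶜ.card = k) (hd : m + k = d) (x : Fin d) (hx : m ≤ (x : ℕ)) :
    complPerm S hm hk hd x = Sᶜ.orderEmbOfFin hk ⟨(x : ℕ) - m, by omega⟩ := by
  have h1 : (finCongr hd).symm x = Fin.natAdd m ⟨(x : ℕ) - m, by omega⟩ := by
    apply Fin.ext; simp; omega
  rw [complPerm]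
  simp only [trans_apply]
  rw [h1, finSumFinEquiv_symm_apply_natAdd, sumEquiv_inr]

lemma sq_pow_congr {M : Type*} [Monoid M] {x : M} (hx : x * x = 1) {a b : ℕ}
    (h : a % 2 = b % 2) : x ^ a = x ^ b := by
  have key : ∀ n : ℕ, x ^ n = x ^ (n % 2) := by
    intro n
    conv_lhs => rw [← Nat.div_add_mod n 2]
    rw [pow_add, pow_mul, pow_two, hx, one_pow, one_mul]
  rw [key a, key b, h]

set_option maxHeartbeats 1600000 in
theorem sign_complPerm {d : ℕ} : ∀ (m : ℕ) {k : ℕ} (hd : m + k = d) (S : Finset (Fin d))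
    (hm : S.card = m) (hk : Sᶜ.card = k),
    Equiv.Perm.sign (complPerm S hm hk hd)
      = (-1) ^ (∑ i ∈ S, (i : ℕ) + ∑ j ∈ Finset.range m, j) := by
  intro m
  induction m with
  | zero =>
    intro k hd S hm hk
    have hS : S = ∅ := Finset.card_eq_zero.mp hm
    subst hS
    have huniv : (Finset.univ : Finset (Fin d)).card = k := by
      rw [← Finset.compl_empty]; exact hk
    have h1 : complPerm ∅ hm hk hd = 1 := by
      apply Equiv.ext; intro x
      rw [complPerm_apply_ge _ hm hk hd x (Nat.zero_le _)]
      apply Fin.ext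
      rw [orderEmbOfFin_congr (Finset.compl_empty) hk huniv, orderEmbOfFin_univ]
      simp
    rw [h1]
    simp
  | succ n ih =>
    intro k hd S hm hk
    have hne : S.Nonempty := Finset.card_pos.mp (by omega)
    obtain ⟨D, rfl⟩ : ∃ D, d = D + 1 := ⟨d - 1, by omega⟩
    have haS : S.min' hne ∈ S := S.min'_mem hne
    have hanc : S.min' hne ∉ Sᶜ := by rw [Finset.mem_compl]; simpa using haS
    have hm' : (S.erase (S.min' hne)).card = n := by
      rw [Finset.card_erase_of_mem haS, hm]
      omega
    have hcompl : (S.erase (S.min' hne))ᶜ = insert (S.min' hne) Sᶜ := Finset.compl_erase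
    have hk' : (S.erase (S.min' hne))ᶜ.card = k + 1 := by
      rw [hcompl, Finset.card_insert_of_notMem hanc, hk]
    have hd' : n + (k + 1) = D + 1 := by omega
    have hak : ((S.min' hne : Fin (D+1)) : ℕ) ≤ k := by
      have hsub : Finset.Iio (S.min' hne) ⊆ Sᶜ := by
        intro y hy
        rw [Finset.mem_Iio] at hy
        rw [Finset.mem_compl]
        intro hyS
        exact absurd (S.min'_le y hyS) (not_le.mpr hy)
      have := Finset.card_le_card hsub
      rwa [Fin.card_Iio, hk] at this
    have hc : n + ((S.min' hne : Fin (D+1)) : ℕ) < D + 1 := by omega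
    have key : complPerm (S.erase (S.min' hne)) hm' hk' hd'
        = complPerm S hm hk hd * (Fin.cycleRange ⟨n + ((S.min' hne : Fin (D+1)) : ℕ), hc⟩) := by
      apply Equiv.ext
      intro x
      rw [Equiv.Perm.mul_apply]
      rcases lt_trichotomy x ⟨n + ((S.min' hne : Fin (D+1)) : ℕ), hc⟩ with hlt | heq | hgt
      · rw [Fin.cycleRange_of_lt hlt]
        have hxc : (x : ℕ) < n + ((S.min' hne : Fin (D+1)) : ℕ) := hlt
        have hx1 : ((x + 1 : Fin (D+1)) : ℕ) = (x : ℕ) + 1 := by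
          apply Fin.val_add_one_of_lt
          exact lt_of_lt_of_le hlt (Fin.le_last _)
        by_cases hxn : (x : ℕ) < n
        · rw [complPerm_apply_lt _ hm' hk' hd' x hxn]
          rw [complPerm_apply_lt S hm hk hd (x+1) (by omega)]
          rw [orderEmbOfFin_erase_min hm hne]
          congr 1
          apply Fin.ext
          simp [hx1]
        · have hxn' : n ≤ (x : ℕ) := not_lt.mp hxn
          rw [complPerm_apply_ge _ hm' hk' hd' x hxn']
          rw [complPerm_apply_ge S hm hk hd (x+1) (by omega)]
          have hja : (x : ℕ) - n < ((S.min' hne : Fin (D+1)) : ℕ) := by omega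
          have hbd : (x : ℕ) - n < D + 1 := by omega
          have hinit2 : ∀ y : Fin (D+1), y ≤ ⟨(x : ℕ) - n, hbd⟩ → y ∈ Sᶜ := by
            intro y hy
            rw [Finset.mem_compl]
            intro hyS
            have := S.min'_le y hyS
            rw [Fin.le_def] at hy this
            simp at hy
            omega
          have e2 := orderEmbOfFin_of_initial hk ⟨((x+1 : Fin (D+1)) : ℕ) - (n+1), by omega⟩
            ⟨(x : ℕ) - n, hbd⟩ (by simp [hx1]) hinit2
          have e1 := orderEmbOfFin_of_initial hk' ⟨(x : ℕ) - n, by omega⟩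
            ⟨(x : ℕ) - n, hbd⟩ (by simp) (by
              intro y hy
              rw [hcompl, Finset.mem_insert]
              exact Or.inr (hinit2 y hy))
          rw [e1, e2]
      · rw [heq, Fin.cycleRange_self]
        rw [complPerm_apply_lt S hm hk hd 0 (by simp)]
        rw [complPerm_apply_ge _ hm' hk' hd' _ (by simp)]
        have e1 : S.orderEmbOfFin hm ⟨((0 : Fin (D+1)) : ℕ), by simp⟩ = S.min' hne := by
          apply orderEmbOfFin_eq_of _ _ _ haS
          have : S.filter (fun y => y < S.min' hne) = ∅ := by
            apply Finset.filter_eq_empty_iff.mpr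
            intro y hy
            exact not_lt.mpr (S.min'_le y hy)
          rw [this]
          simp
        have e2 : (S.erase (S.min' hne))ᶜ.orderEmbOfFin hk'
            ⟨((⟨n + ((S.min' hne : Fin (D+1)) : ℕ), hc⟩ : Fin (D+1)) : ℕ) - n, by simp; omega⟩
            = S.min' hne := by
          apply orderEmbOfFin_of_initial _ _ _ (by simp)
          intro y hy
          rw [hcompl, Finset.mem_insert]
          rcases eq_or_lt_of_le hy with h1 | h1
          · exact Or.inl h1
          · refine Or.inr ?_
            rw [Finset.mem_compl]
            intro hyS
            exact absurd (S.min'_le y hyS) (not_le.mpr h1)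
        rw [e1, e2]
      · rw [Fin.cycleRange_of_gt hgt]
        have hxc : n + ((S.min' hne : Fin (D+1)) : ℕ) < (x : ℕ) := hgt
        rw [complPerm_apply_ge _ hm' hk' hd' x (by omega)]
        rw [complPerm_apply_ge S hm hk hd x (by omega)]
        have hj1 : (x : ℕ) - (n + 1) < k := by omega
        have hlt2 : S.min' hne < Sᶜ.orderEmbOfFin hk ⟨(x : ℕ) - (n+1), hj1⟩ := by
          have hge := strictMono_le_apply (Sᶜ.orderEmbOfFin hk).strictMono ⟨(x : ℕ) - (n+1), hj1⟩
          have hmem := Finset.orderEmbOfFin_mem Sᶜ hk ⟨(x : ℕ) - (n+1), hj1⟩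
          have hne2 : Sᶜ.orderEmbOfFin hk ⟨(x : ℕ) - (n+1), hj1⟩ ≠ S.min' hne := by
            intro hcon
            rw [hcon] at hmem
            exact hanc hmem
          rw [Fin.lt_def]
          have := Fin.ext_iff.not.mp hne2
          simp only [Fin.val_mk] at hge
          omega
        apply orderEmbOfFin_eq_of
        · rw [hcompl]
          exact Finset.mem_insert_of_mem (Finset.orderEmbOfFin_mem _ _ _)
        · rw [hcompl, Finset.filter_insert, if_pos hlt2,
            Finset.card_insert_of_notMem (fun hcc => hanc (Finset.mem_filter.mp hcc).1),
            card_filter_lt_orderEmbOfFin hk]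
          simp only [Fin.val_mk]
          omega
    have hsign := congrArg Equiv.Perm.sign key
    rw [Equiv.Perm.sign_mul, Fin.sign_cycleRange, ih hd' _ hm' hk'] at hsign
    simp only [Fin.val_mk] at hsign
    have hS : ∑ i ∈ S, (i : ℕ) = ((S.min' hne : Fin (D+1)) : ℕ)
        + ∑ i ∈ S.erase (S.min' hne), (i : ℕ) := (Finset.add_sum_erase S _ haS).symm
    have hu : ∀ u : ℤˣ, u * u = 1 := Int.units_mul_self
    have step : Equiv.Perm.sign (complPerm S hm hk hd)
        = ((-1) ^ (∑ i ∈ S.erase (S.min' hne), (i : ℕ) + ∑ j ∈ Finset.range n, j) : ℤˣ)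
          * (-1) ^ (n + ((S.min' hne : Fin (D+1)) : ℕ)) := by
      rw [hsign, mul_assoc, hu, mul_one]
    rw [step, ← pow_add]
    apply sq_pow_congr (hu (-1))
    rw [Finset.sum_range_succ]
    omega

lemma block_det {R : Type*} [CommRing R] {α β : Type*} [Fintype α] [Fintype β]
    [DecidableEq α] [DecidableEq β] (N N' : Matrix (α ⊕ β) (α ⊕ β) R) (h : N * N' = 1) :
    N.det * (N'.submatrix Sum.inl Sum.inl).det = (N.submatrix Sum.inr Sum.inr).det := by
  have hone : (1 : Matrix (α ⊕ β) (α ⊕ β) R)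
      = Matrix.fromBlocks 1 0 0 1 := by
    ext x y
    cases x <;> cases y <;> simp [Matrix.one_apply]
  have hN := Matrix.fromBlocks_toBlocks N
  have hN' := Matrix.fromBlocks_toBlocks N'
  have hmul : Matrix.fromBlocks (N.toBlocks₁₁) (N.toBlocks₁₂) (N.toBlocks₂₁) (N.toBlocks₂₂)
      * Matrix.fromBlocks (N'.toBlocks₁₁) (N'.toBlocks₁₂) (N'.toBlocks₂₁) (N'.toBlocks₂₂)
      = Matrix.fromBlocks 1 0 0 1 := by
    rw [hN, hN', h, hone]
  rw [Matrix.fromBlocks_multiply] at hmul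
  have h11 : N.toBlocks₁₁ * N'.toBlocks₁₁ + N.toBlocks₁₂ * N'.toBlocks₂₁ = 1 := by
    have := congrArg Matrix.toBlocks₁₁ hmul
    rwa [Matrix.toBlocks_fromBlocks₁₁, Matrix.toBlocks_fromBlocks₁₁] at this
  have h21 : N.toBlocks₂₁ * N'.toBlocks₁₁ + N.toBlocks₂₂ * N'.toBlocks₂₁ = 0 := by
    have := congrArg Matrix.toBlocks₂₁ hmul
    rwa [Matrix.toBlocks_fromBlocks₂₁, Matrix.toBlocks_fromBlocks₂₁] at this
  have hNB : N * Matrix.fromBlocks (N'.toBlocks₁₁) 0 (N'.toBlocks₂₁) 1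
      = Matrix.fromBlocks 1 (N.toBlocks₁₂) 0 (N.toBlocks₂₂) := by
    conv_lhs => rw [← hN]
    rw [Matrix.fromBlocks_multiply]
    rw [h11, h21]
    congr 1 <;> simp
  have hdet := congrArg Matrix.det hNB
  simp only [Matrix.det_mul, Matrix.det_fromBlocks_zero₂₁, Matrix.det_fromBlocks_zero₁₂,
    Matrix.det_one, one_mul, mul_one] at hdet
  exact hdet

lemma neg_one_pow_field {K : Type*} [Field K] {a b : ℕ} (h : a % 2 = b % 2) :
    (-1 : K) ^ a = (-1 : K) ^ b :=
  sq_pow_congr (by ring) h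

/-- Jacobi's identity on complementary minors. -/
theorem jacobi_minor {K : Type*} [Field K] {d m k : ℕ} (hd : m + k = d)
    (A A' : Matrix (Fin d) (Fin d) K) (hAA' : A * A' = 1)
    (I J : Finset (Fin d)) (hI : I.card = m) (hJ : J.card = m)
    (hIc : Iᶜ.card = k) (hJc : Jᶜ.card = k) :
    A.det * (A'.submatrix (I.orderEmbOfFin hI) (J.orderEmbOfFin hJ)).det
      = (-1 : K) ^ (∑ i ∈ I, (i : ℕ) + ∑ j ∈ J, (j : ℕ))
        * (A.submatrix (Jᶜ.orderEmbOfFin hJc) (Iᶜ.orderEmbOfFin hIc)).det := by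
  classical
  set f : Fin m ⊕ Fin k ≃ Fin d := finSumFinEquiv.trans (finCongr hd) with hf
  have hcomp : ∀ (S : Finset (Fin d)) (hS : S.card = m) (hSc : Sᶜ.card = k) (z : Fin m ⊕ Fin k),
      complPerm S hS hSc hd (f z) = sumEquiv S hS hSc z := by
    intro S hS hSc z
    simp [complPerm, hf]
  -- N and N'
  set N : Matrix (Fin m ⊕ Fin k) (Fin m ⊕ Fin k) K
    := A.submatrix (sumEquiv J hJ hJc) (sumEquiv I hI hIc) with hN
  set N' : Matrix (Fin m ⊕ Fin k) (Fin m ⊕ Fin k) K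
    := A'.submatrix (sumEquiv I hI hIc) (sumEquiv J hJ hJc) with hN'
  have hNN' : N * N' = 1 := by
    rw [hN, hN', Matrix.submatrix_mul_equiv, hAA', Matrix.submatrix_one_equiv]
  have hblock := block_det N N' hNN'
  -- identify the corner blocks
  have hcorner1 : N'.submatrix Sum.inl Sum.inl
      = A'.submatrix (I.orderEmbOfFin hI) (J.orderEmbOfFin hJ) := by
    ext i j; simp [hN', Matrix.submatrix_apply]
  have hcorner2 : N.submatrix Sum.inr Sum.inr
      = A.submatrix (Jᶜ.orderEmbOfFin hJc) (Iᶜ.orderEmbOfFin hIc) := by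
    ext i j; simp [hN, Matrix.submatrix_apply]
  -- determinant of N via permutations
  have hdetN : N.det = (Equiv.Perm.sign (complPerm J hJ hJc hd) : ℤ)
      * ((Equiv.Perm.sign (complPerm I hI hIc hd) : ℤ) * A.det) := by
    have h1 : N = (A.submatrix (complPerm J hJ hJc hd) (complPerm I hI hIc hd)).submatrix f f := by
      ext i j
      simp [hN, Matrix.submatrix_apply, hcomp]
    rw [h1, Matrix.det_submatrix_equiv_self]
    have h2 : A.submatrix (complPerm J hJ hJc hd) (complPerm I hI hIc hd)
        = (A.submatrix (complPerm J hJ hJc hd) id).submatrix id (complPerm I hI hIc hd) := by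
      ext i j; simp [Matrix.submatrix_apply]
    rw [h2, Matrix.det_permute', Matrix.det_permute]
    ring
  rw [hcorner1, hcorner2, hdetN, sign_complPerm m hd J hJ hJc, sign_complPerm m hd I hI hIc]
    at hblock
  simp only [Units.val_pow_eq_pow_val, Units.val_neg, Units.val_one, Int.cast_pow,
    Int.cast_neg, Int.cast_one] at hblock
  rw [← hblock]
  have hsgn : (-1 : K) ^ (∑ i ∈ I, (i : ℕ) + ∑ j ∈ J, (j : ℕ))
      * ((-1 : K) ^ (∑ i ∈ J, (i : ℕ) + ∑ j ∈ Finset.range m, j)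
        * (-1 : K) ^ (∑ i ∈ I, (i : ℕ) + ∑ j ∈ Finset.range m, j)) = 1 := by
    rw [← pow_add, ← pow_add]
    rw [neg_one_pow_field (b := 0) (by omega)]
    exact pow_zero _
  have hre : (-1 : K) ^ (∑ i ∈ I, (i : ℕ) + ∑ j ∈ J, (j : ℕ))
      * ((-1 : K) ^ (∑ i ∈ J, (i : ℕ) + ∑ j ∈ Finset.range m, j)
          * ((-1 : K) ^ (∑ i ∈ I, (i : ℕ) + ∑ j ∈ Finset.range m, j) * A.det)
        * (A'.submatrix (I.orderEmbOfFin hI) (J.orderEmbOfFin hJ)).det)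
      = ((-1 : K) ^ (∑ i ∈ I, (i : ℕ) + ∑ j ∈ J, (j : ℕ))
          * ((-1 : K) ^ (∑ i ∈ J, (i : ℕ) + ∑ j ∈ Finset.range m, j)
            * (-1 : K) ^ (∑ i ∈ I, (i : ℕ) + ∑ j ∈ Finset.range m, j)))
        * (A.det * (A'.submatrix (I.orderEmbOfFin hI) (J.orderEmbOfFin hJ)).det) := by
    ring
  rw [hre, hsgn, one_mul]

end AuxJacobi

/-- Model of `∧^k M` for a `d`-dimensional space `M` with chosen basis: coordinates indexed by
`k`-element subsets of `Fin d` (i.e. by injective order morphisms `[k] → [d]`). The functorial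
action of an endomorphism with matrix `A` is given by its `k × k` minors:
`(∧^k A) e_ψ = Σ_φ det A_{φ,ψ} e_φ`. -/
noncomputable def extPowMap {K : Type*} [Field K] {d : ℕ} (k : ℕ)
    (A : Matrix (Fin d) (Fin d) K) :
    ({s : Finset (Fin d) // s.card = k} → K) → ({s : Finset (Fin d) // s.card = k} → K) :=
  fun c t => ∑ u : {s : Finset (Fin d) // s.card = k},
    (A.submatrix (fun i => (t.1.orderIsoOfFin t.2 i).1)
      (fun i => (u.1.orderIsoOfFin u.2 i).1)).det * c u

/-- The Hodge-type star operator `⋆ : ∧^k M → ∧^{d−k} M`, `⋆ e_φ = sgn(φ*) e_{φ*}` with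
`sgn(φ*) = (−1)^{Σ_i φ*(i)}` (1-based indexing, whence the `+ 1`), in coordinates. -/
noncomputable def starMap {K : Type*} [Field K] {d k : ℕ} (hkd : k ≤ d) :
    ({s : Finset (Fin d) // s.card = k} → K) → ({s : Finset (Fin d) // s.card = d - k} → K) :=
  fun c u => ((-1 : K) ^ (∑ i ∈ u.1, ((i : ℕ) + 1))) *
    c ⟨u.1ᶜ, by rw [Finset.card_compl, u.2, Fintype.card_fin]; omega⟩

/-- For a `d`-dimensional `K`-vector space `M` with basis `e` and any invertible endomorphism
`A` of `M`: `det A · ((A⁻¹)ᵗ ∘ ⋆) = ⋆ ∘ ∧^k A` on `∧^k M`, where the transpose is taken with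
respect to the basis `e` and `A`, `(A⁻¹)ᵗ` act functorially on exterior powers (in the basis
model, via minors). -/
theorem stmt13 {K M : Type*} [Field K] [AddCommGroup M] [Module K M]
    {d : ℕ} (e : Module.Basis (Fin d) K M) (A : M ≃ₗ[K] M) (k : ℕ) (hkd : k ≤ d)
    (c : {s : Finset (Fin d) // s.card = k} → K) :
    LinearMap.det (A : M →ₗ[K] M) •
        extPowMap (d - k) ((LinearMap.toMatrix e e (A.symm : M →ₗ[K] M)).transpose)
          (starMap hkd c) =
      starMap hkd (extPowMap k (LinearMap.toMatrix e e (A : M →ₗ[K] M)) c) := by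

  classical
  set M0 := LinearMap.toMatrix e e (A : M →ₗ[K] M) with hM0
  set M1 := LinearMap.toMatrix e e (A.symm : M →ₗ[K] M) with hM1
  have hcomp : (A : M →ₗ[K] M) ∘ₗ (A.symm : M →ₗ[K] M) = LinearMap.id := by
    ext x; simp
  have hMM : M0 * M1 = 1 := by
    rw [hM0, hM1, ← LinearMap.toMatrix_comp e e e, hcomp, LinearMap.toMatrix_id]
  have hdetA : LinearMap.det (A : M →ₗ[K] M) = M0.det := (LinearMap.det_toMatrix e _).symm
  funext t
  simp only [Pi.smul_apply, smul_eq_mul, extPowMap, starMap, Finset.coe_orderIsoOfFin_apply]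
  set E : {s : Finset (Fin d) // s.card = k} ≃ {s : Finset (Fin d) // s.card = d - k} :=
    { toFun := fun s => ⟨s.1ᶜ, by rw [Finset.card_compl, s.2, Fintype.card_fin]⟩
      invFun := fun u => ⟨u.1ᶜ, by rw [Finset.card_compl, u.2, Fintype.card_fin]; omega⟩
      left_inv := fun s => Subtype.ext (compl_compl _)
      right_inv := fun u => Subtype.ext (compl_compl _) } with hE
  rw [← Equiv.sum_comp E
    (fun u : {s : Finset (Fin d) // s.card = d - k} =>
      (((M1.transpose).submatrix (fun i => t.1.orderEmbOfFin t.2 i)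
          (fun i => u.1.orderEmbOfFin u.2 i)).det *
        ((-1 : K) ^ (∑ i ∈ u.1, ((i : ℕ) + 1)) *
          c ⟨u.1ᶜ, by rw [Finset.card_compl, u.2, Fintype.card_fin]; omega⟩)))]
  rw [Finset.mul_sum, Finset.mul_sum]
  apply Finset.sum_congr rfl
  intro s _
  simp only [hE, Equiv.coe_fn_mk]
  rw [hdetA]
  rw [show ∀ pf : ((s.1)ᶜᶜ).card = k,
      (⟨(s.1)ᶜᶜ, pf⟩ : {s : Finset (Fin d) // s.card = k}) = s
    from fun pf => Subtype.ext (compl_compl _)]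
  rw [← Matrix.transpose_submatrix, Matrix.det_transpose]
  have hI : (s.1)ᶜ.card = d - k := by
    rw [Finset.card_compl, s.2, Fintype.card_fin]
  have hIc : ((s.1)ᶜ)ᶜ.card = k := by rw [compl_compl]; exact s.2
  have hJc : (t.1)ᶜ.card = k := by
    rw [Finset.card_compl, t.2, Fintype.card_fin]; omega
  have hjac := jacobi_minor (show (d - k) + k = d by omega) M0 M1 hMM
    (s.1)ᶜ t.1 hI t.2 hIc hJc
  have hmat : M0.submatrix ((t.1)ᶜ.orderEmbOfFin hJc) (((s.1)ᶜ)ᶜ.orderEmbOfFin hIc)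
      = M0.submatrix (fun i => (t.1)ᶜ.orderEmbOfFin hJc i)
          (fun i => (s.1).orderEmbOfFin s.2 i) := by
    ext i j
    rw [Matrix.submatrix_apply, Matrix.submatrix_apply,
      orderEmbOfFin_congr (compl_compl (s.1)) hIc s.2]
  rw [hmat] at hjac
  rw [← mul_assoc, hjac]
  have h1 : ∑ x ∈ (s.1)ᶜ, ((x : ℕ) + 1) = (∑ x ∈ (s.1)ᶜ, (x : ℕ)) + (d - k) := by
    rw [Finset.sum_add_distrib, Finset.sum_const, hI, smul_eq_mul, mul_one]
  have h2 : ∑ x ∈ t.1, ((x : ℕ) + 1) = (∑ x ∈ t.1, (x : ℕ)) + (d - k) := by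
    rw [Finset.sum_add_distrib, Finset.sum_const, t.2, smul_eq_mul, mul_one]
  rw [h1, h2]
  have hsgn : (-1 : K) ^ (∑ i ∈ (s.1)ᶜ, (i : ℕ) + ∑ j ∈ t.1, (j : ℕ))
      * (-1 : K) ^ ((∑ x ∈ (s.1)ᶜ, (x : ℕ)) + (d - k))
      = (-1 : K) ^ ((∑ x ∈ t.1, (x : ℕ)) + (d - k)) := by
    rw [← pow_add]
    exact neg_one_pow_field (by omega)
  linear_combination ((M0.submatrix (fun i => (t.1)ᶜ.orderEmbOfFin hJc i)
    (fun i => (s.1).orderEmbOfFin s.2 i)).det * c s) * hsgn
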